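/- Let p + V and q + W be k-dimensional affine subspaces of a Banach space X with (p + V) ∩ B_{1/2}(0) ≠ ∅. If (p + V) ∩ B_1(0) ⊂ B_δ(q + W), then the Hausdorff distance satisfies d_H((p + V) ∩ B_1(0), (q + W) ∩ B_1(0)) ≤ c(k) δ, and in particular the Grassmannian distance satisfies d_G(V, W) ≤ c(k) δ. -/

import Mathlib

open Metric Module

/-- Auerbach basis: a basis of unit-ball vectors whose coordinate functionals
have norm at most 1. -/
lemma exists_auerbach_basis (k : ℕ) (E : Type*) [NormedAddCommGroup E] [NormedSpace ℝ E]
    [FiniteDimensional ℝ E] (hk : Module.finrank ℝ E = k) :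
    ∃ e : Basis (Fin k) ℝ E, (∀ i, ‖e i‖ ≤ 1) ∧ ∀ (v : E) (i), |e.repr v i| ≤ ‖v‖ := by
  classical
  obtain ⟨b⟩ : Nonempty (Basis (Fin k) ℝ E) := ⟨Module.finBasisOfFinrankEq ℝ E hk⟩
  set f : (Fin k → E) → ℝ := fun v => |b.det v| with hf
  have hcont : Continuous f := by
    have h1 : Continuous fun v : Fin k → E => (b.toMatrix v).det :=
      Continuous.matrix_det (continuous_matrix fun i j =>
        ((b.coord i).continuous_of_finiteDimensional).comp (continuous_apply j))
    have h2 : (fun v : Fin k → E => b.det v) = fun v => (b.toMatrix v).det := by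
      ext v; rw [Basis.det_apply]
    exact (h2 ▸ h1).abs
  set K : Set (Fin k → E) := Set.pi Set.univ (fun _ => closedBall (0:E) 1) with hK
  have hKc : IsCompact K := isCompact_univ_pi fun _ => isCompact_closedBall 0 1
  set g : Fin k → E := fun i => (‖b i‖ + 1)⁻¹ • b i with hg
  have hbn : ∀ i, (0:ℝ) < ‖b i‖ + 1 := fun i => by positivity
  have hgK : g ∈ K := by
    intro i _
    simp only [hg, mem_closedBall, dist_zero_right, norm_smul, norm_inv,
      Real.norm_eq_abs, abs_of_pos (hbn i)]
    rw [inv_mul_le_iff₀ (hbn i)]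
    nlinarith [norm_nonneg (b i)]
  have hgpos : 0 < f g := by
    have : b.det g = (∏ i, (‖b i‖ + 1)⁻¹) • b.det b := by
      rw [hg]
      exact b.det.toMultilinearMap.map_smul_univ (fun i => (‖b i‖ + 1)⁻¹) b
    rw [hf]
    simp only [this, Basis.det_self, smul_eq_mul, mul_one]
    rw [abs_pos]
    exact Finset.prod_ne_zero_iff.2 fun i _ => inv_ne_zero (ne_of_gt (hbn i))
  obtain ⟨e₀, he₀K, hmax⟩ := hKc.exists_isMaxOn ⟨g, hgK⟩ hcont.continuousOn
  have hdet : b.det e₀ ≠ 0 := by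
    intro h0
    have := hmax hgK
    rw [hf] at this
    simp only [h0, abs_zero] at this
    exact absurd (lt_of_lt_of_le hgpos this) (lt_irrefl 0)
  have hbasis := (Basis.is_basis_iff_det b).2 (isUnit_iff_ne_zero.2 hdet)
  let e : Basis (Fin k) ℝ E := Basis.mk hbasis.1 hbasis.2.ge
  have hee₀ : ∀ i, e i = e₀ i := fun i => Basis.mk_apply _ _ i
  refine ⟨e, fun i => ?_, fun v i => ?_⟩
  · have := he₀K i (Set.mem_univ i)
    rw [hee₀ i]
    simpa [mem_closedBall, dist_zero_right] using this
  · -- Cramer identity: b.det (update e₀ i v) = e.repr v i * b.det e₀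
    have hcramer : b.det (Function.update e₀ i v) = e.repr v i * b.det e₀ := by
      have hv : v = ∑ j, e.repr v j • e₀ j := by
        conv_lhs => rw [← e.sum_repr v]
        exact Finset.sum_congr rfl fun j _ => by rw [hee₀ j]
      conv_lhs => rw [hv]
      rw [b.det.map_update_sum]
      rw [Finset.sum_eq_single i]
      · rw [b.det.map_update_smul, Function.update_eq_self, smul_eq_mul]
      · intro j _ hji
        rw [b.det.map_update_smul, b.det.map_update_self _ hji.symm, smul_zero]
      · simp
    -- bound |b.det (update e₀ i v)| ≤ ‖v‖ * |b.det e₀|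
    have hbound : |b.det (Function.update e₀ i v)| ≤ ‖v‖ * |b.det e₀| := by
      rcases eq_or_ne v 0 with rfl | hv0
      · simp
      · have hvn : (0:ℝ) < ‖v‖ := norm_pos_iff.2 hv0
        set u : E := ‖v‖⁻¹ • v with hu
        have huK : Function.update e₀ i u ∈ K := by
          intro j _
          rcases eq_or_ne j i with rfl | hj
          · simp only [Function.update_self, mem_closedBall, dist_zero_right, hu,
              norm_smul, norm_inv, Real.norm_eq_abs, abs_of_pos hvn]
            rw [inv_mul_cancel₀ (ne_of_gt hvn)]
          · rw [Function.update_of_ne hj]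
            exact he₀K j (Set.mem_univ j)
        have heq : b.det (Function.update e₀ i v) = ‖v‖ • b.det (Function.update e₀ i u) := by
          have : v = ‖v‖ • u := by rw [hu, smul_smul, mul_inv_cancel₀ (ne_of_gt hvn), one_smul]
          conv_lhs => rw [this]
          exact b.det.map_update_smul e₀ i ‖v‖ u
        rw [heq, smul_eq_mul, abs_mul, abs_of_pos hvn]
        exact mul_le_mul_of_nonneg_left (hmax huK) (le_of_lt hvn)
    rw [hcramer, abs_mul] at hbound
    exact le_of_mul_le_mul_right hbound (abs_pos.2 hdet)

/-- If every vector of `V` is `ε‖v‖`-close to `W` and the two subspaces have the same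
finite dimension `k` with `kε ≤ 1/2`, then every vector of `W` is `2kε‖w‖`-close to `V`. -/
lemma subspace_symm_close (k : ℕ) {X : Type} [NormedAddCommGroup X] [NormedSpace ℝ X]
    (V W : Submodule ℝ X) [FiniteDimensional ℝ V] [FiniteDimensional ℝ W]
    (hV : Module.finrank ℝ V = k) (hW : Module.finrank ℝ W = k)
    {ε : ℝ} (hε : 0 ≤ ε) (hsmall : (k:ℝ) * ε ≤ 1/2)
    (h : ∀ v ∈ V, ∃ w ∈ W, ‖v - w‖ ≤ ε * ‖v‖) :
    ∀ w ∈ W, ∃ v ∈ V, ‖w - v‖ ≤ 2 * k * ε * ‖w‖ ∧ ‖v‖ ≤ 2 * ‖w‖ := by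
  classical
  obtain ⟨e, he1, he2⟩ := exists_auerbach_basis k V hV
  have hch : ∀ i : Fin k, ∃ w : W, ‖((e i : X)) - (w : X)‖ ≤ ε := by
    intro i
    obtain ⟨w, hwW, hw⟩ := h (e i) (e i).2
    refine ⟨⟨w, hwW⟩, le_trans hw ?_⟩
    have h1 : ‖(e i : X)‖ ≤ 1 := by rw [← Submodule.coe_norm]; exact he1 i
    nlinarith
  choose wf hwf using hch
  let S : V →ₗ[ℝ] W := ∑ i, LinearMap.smulRight (e.coord i) (wf i)
  have hSapply : ∀ v : V, (S v : X) = ∑ i, e.repr v i • (wf i : X) := by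
    intro v
    simp [S, LinearMap.sum_apply, LinearMap.smulRight_apply, Basis.coord_apply]
  have hkey : ∀ v : V, ‖(v : X) - (S v : X)‖ ≤ k * ε * ‖(v : X)‖ := by
    intro v
    have hv : (v : X) = ∑ i, e.repr v i • ((e i : X)) := by
      conv_lhs => rw [← e.sum_repr v]
      push_cast
      rfl
    calc ‖(v : X) - (S v : X)‖ = ‖∑ i, e.repr v i • ((e i : X) - (wf i : X))‖ := by
          rw [hv, hSapply, ← Finset.sum_sub_distrib]
          simp [smul_sub]
      _ ≤ ∑ i, ‖e.repr v i • ((e i : X) - (wf i : X))‖ := norm_sum_le _ _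
      _ ≤ ∑ _i : Fin k, ‖(v : X)‖ * ε := by
          refine Finset.sum_le_sum fun i _ => ?_
          rw [norm_smul, Real.norm_eq_abs]
          have := he2 v i
          rw [Submodule.coe_norm] at this
          exact mul_le_mul this (hwf i) (norm_nonneg _) (abs_nonneg _ |>.trans this)
      _ = k * ε * ‖(v : X)‖ := by
          rw [Finset.sum_const, Finset.card_univ, Fintype.card_fin, nsmul_eq_mul]; ring
  have hhalf : ∀ v : V, ‖(v : X) - (S v : X)‖ ≤ (1/2) * ‖(v : X)‖ := by
    intro v
    refine le_trans (hkey v) (mul_le_mul_of_nonneg_right hsmall (norm_nonneg _))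
  have hinj : Function.Injective S := by
    rw [← LinearMap.ker_eq_bot]
    rw [LinearMap.ker_eq_bot']
    intro v hv
    have h0 : (S v : X) = 0 := by rw [hv]; rfl
    have := hhalf v
    rw [h0, sub_zero] at this
    have : ‖(v : X)‖ = 0 := by linarith [norm_nonneg (v : X)]
    ext
    simpa using norm_eq_zero.1 this
  have hsurj : Function.Surjective S := by
    rw [← LinearMap.range_eq_top]
    apply Submodule.eq_top_of_finrank_eq
    rw [LinearMap.finrank_range_of_inj hinj, hV, hW]
  intro w hw
  obtain ⟨v, hv⟩ := hsurj ⟨w, hw⟩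
  have hSv : (S v : X) = w := by rw [hv]
  have hb1 : ‖(v : X)‖ ≤ 2 * ‖w‖ := by
    have h1 := hhalf v
    have h2 : ‖(v : X)‖ ≤ ‖(v : X) - (S v : X)‖ + ‖(S v : X)‖ := by
      simpa using norm_add_le ((v : X) - (S v : X)) (S v : X)
    rw [hSv] at h2 h1
    have h4 : ‖↑v - w‖ ≤ 1 / 2 * ‖(v:X)‖ := h1
    linarith
  refine ⟨v, v.2, ?_, hb1⟩
  have h3 : ‖w - (v : X)‖ = ‖(v : X) - (S v : X)‖ := by rw [hSv, norm_sub_rev]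
  rw [h3]
  calc ‖(v : X) - (S v : X)‖ ≤ k * ε * ‖(v : X)‖ := hkey v
    _ ≤ k * ε * (2 * ‖w‖) := by
        refine mul_le_mul_of_nonneg_left hb1 (by positivity)
    _ = 2 * k * ε * ‖w‖ := by ring

/-- Push a point of a subspace that is slightly outside the unit ball back into it. -/
lemma shrink_into_ball {X : Type} [NormedAddCommGroup X] [NormedSpace ℝ X]
    (U : Submodule ℝ X) {u : X} (hu : u ∈ U) {s : ℝ} (hs : 0 < s) (hn : ‖u‖ < 1 + s) :
    ∃ u' ∈ (U : Set X) ∩ ball 0 1, ‖u - u'‖ ≤ s := by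
  refine ⟨(1+s)⁻¹ • u, ⟨U.smul_mem _ hu, ?_⟩, ?_⟩
  · rw [mem_ball_zero_iff, norm_smul, norm_inv, Real.norm_eq_abs, abs_of_pos (by linarith)]
    rw [inv_mul_lt_iff₀ (by linarith), mul_one]
    exact hn
  · have h2 : u - (1+s)⁻¹ • u = (1 - (1+s)⁻¹) • u := by rw [sub_smul, one_smul]
    have h1 : (1:ℝ) - (1+s)⁻¹ = s/(1+s) := by field_simp; ring
    rw [h2, norm_smul, Real.norm_eq_abs, h1, abs_of_pos (by positivity)]
    rw [div_mul_eq_mul_div, div_le_iff₀ (by linarith)]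
    nlinarith [norm_nonneg u]

/-- Push a point of an affine plane slightly outside the unit ball back into it,
by moving it toward an anchor point of small norm. -/
lemma affine_shrink {X : Type} [NormedAddCommGroup X] [NormedSpace ℝ X]
    (U : Submodule ℝ X) (p x x₀ : X) (hx : x - p ∈ U) (hx₀ : x₀ - p ∈ U)
    (hb : ‖x₀‖ ≤ 3/4) (hd : ‖x - x₀‖ ≤ 2) {r : ℝ} (hr : 0 < r) (hr' : r ≤ 1/8)
    (hn : ‖x‖ < 1 + r) :
    ∃ x' ∈ ((fun w => p + w) '' (U : Set X)) ∩ ball 0 1, ‖x - x'‖ ≤ 16 * r := by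
  set t : ℝ := 8 * r with ht
  have ht1 : t ≤ 1 := by rw [ht]; linarith
  have ht0 : 0 < t := by rw [ht]; linarith
  refine ⟨x + t • (x₀ - x), ⟨⟨x + t • (x₀ - x) - p, ?_, by module⟩, ?_⟩, ?_⟩
  · have heq : x + t • (x₀ - x) - p = (x - p) + t • ((x₀ - p) - (x - p)) := by
      module
    rw [heq]
    exact U.add_mem hx (U.smul_mem t (U.sub_mem hx₀ hx))
  · rw [mem_ball_zero_iff]
    have heq : x + t • (x₀ - x) = (1 - t) • x + t • x₀ := by
      module
    rw [heq]
    have h1 : ‖(1 - t) • x + t • x₀‖ ≤ (1 - t) * ‖x‖ + t * ‖x₀‖ := by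
      refine le_trans (norm_add_le _ _) ?_
      rw [norm_smul, norm_smul, Real.norm_eq_abs, Real.norm_eq_abs,
        abs_of_nonneg (by linarith), abs_of_pos ht0]
    have h2 : (1 - t) * ‖x‖ < (1 - t) * (1 + r) ∨ (1 - t) = 0 := by
      rcases eq_or_lt_of_le ht1 with h | h
      · right; linarith
      · left; exact mul_lt_mul_of_pos_left hn (by linarith)
    rcases h2 with h2 | h2
    · nlinarith
    · have hx1 : ‖x‖ < 1 + r := hn
      nlinarith [norm_nonneg x]
  · have heq : x - (x + t • (x₀ - x)) = (-t) • (x₀ - x) := by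
      module
    rw [heq, norm_smul, Real.norm_eq_abs, abs_neg, abs_of_pos ht0, ht]
    have : ‖x₀ - x‖ ≤ 2 := by rw [norm_sub_rev]; exact hd
    nlinarith

set_option maxHeartbeats 2000000 in
theorem affine_planes_hausdorff_close (k : ℕ) :
    ∃ c : ℝ, 0 < c ∧
      ∀ (X : Type) [NormedAddCommGroup X] [NormedSpace ℝ X] [CompleteSpace X]
        (V W : Submodule ℝ X), FiniteDimensional ℝ V → FiniteDimensional ℝ W →
        Module.finrank ℝ V = k → Module.finrank ℝ W = k →
        ∀ (p q : X) (δ : ℝ), 0 ≤ δ →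
        (((fun w => p + w) '' (V : Set X)) ∩ ball 0 (1/2)).Nonempty →
        ((fun w => p + w) '' (V : Set X)) ∩ ball 0 1 ⊆
            Metric.thickening δ ((fun w => q + w) '' (W : Set X)) →
        hausdorffDist (((fun w => p + w) '' (V : Set X)) ∩ ball 0 1)
            (((fun w => q + w) '' (W : Set X)) ∩ ball 0 1) ≤ c * δ ∧
        hausdorffDist ((V : Set X) ∩ ball 0 1) ((W : Set X) ∩ ball 0 1) ≤ c * δ := by
  have hk1 : (0:ℝ) < (k:ℝ) + 1 := by positivity
  refine ⟨2200 * ((k:ℝ) + 1), by positivity, ?_⟩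
  intro X _ _ _ V W hVfd hWfd hV hW p q δ hδ0 hne hsub
  haveI := hVfd; haveI := hWfd
  set P : Set X := (fun w => p + w) '' (V : Set X) with hP
  set Q : Set X := (fun w => q + w) '' (W : Set X) with hQ
  obtain ⟨x₀, hx₀P, hx₀b⟩ := hne
  have hx₀n : ‖x₀‖ < 1/2 := by
    have := mem_ball_zero_iff.1 hx₀b; linarith
  have hx₀B1 : x₀ ∈ P ∩ ball 0 1 := ⟨hx₀P, mem_ball_zero_iff.2 (by linarith)⟩
  -- δ = 0 is impossible
  rcases eq_or_lt_of_le hδ0 with rfl | hδpos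
  · exfalso
    obtain ⟨z, _, hz⟩ := mem_thickening_iff.1 (hsub hx₀B1)
    linarith [dist_nonneg (x := x₀) (y := z)]
  -- anchor on Q
  obtain ⟨y₀, hy₀Q, hy₀d⟩ := mem_thickening_iff.1 (hsub hx₀B1)
  obtain ⟨w₀, hw₀W, hw₀⟩ := hy₀Q
  obtain ⟨v₀, hv₀V, hv₀⟩ := hx₀P
  -- case split on size of δ
  by_cases hbig : 1 / (1100 * ((k:ℝ) + 1)) ≤ δ
  · -- trivial bound: everything is inside the unit ball
    have h2c : (2:ℝ) ≤ 2200 * ((k:ℝ) + 1) * δ := by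
      rw [div_le_iff₀ (by positivity)] at hbig
      nlinarith
    have htriv : ∀ s t : Set X, s ⊆ ball (0:X) 1 → t ⊆ ball (0:X) 1 →
        hausdorffDist s t ≤ 2 := by
      intro s t hs ht
      rcases s.eq_empty_or_nonempty with rfl | hsne
      · rw [hausdorffDist_empty']; norm_num
      rcases t.eq_empty_or_nonempty with rfl | htne
      · rw [hausdorffDist_empty]; norm_num
      refine hausdorffDist_le_of_mem_dist (by norm_num) ?_ ?_
      · intro x hx
        obtain ⟨y, hy⟩ := htne
        refine ⟨y, hy, ?_⟩
        have h1 := mem_ball_zero_iff.1 (hs hx)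
        have h2 := mem_ball_zero_iff.1 (ht hy)
        have := dist_triangle x 0 y
        rw [dist_zero_right, dist_comm (0:X) y, dist_zero_right] at this
        linarith
      · intro y hy
        obtain ⟨x, hx⟩ := hsne
        refine ⟨x, hx, ?_⟩
        have h1 := mem_ball_zero_iff.1 (hs hx)
        have h2 := mem_ball_zero_iff.1 (ht hy)
        have := dist_triangle x 0 y
        rw [dist_zero_right, dist_comm (0:X) y, dist_zero_right] at this
        rw [dist_comm]
        linarith
    constructor
    · exact le_trans (htriv _ _ Set.inter_subset_right Set.inter_subset_right) h2c
    · exact le_trans (htriv _ _ Set.inter_subset_right Set.inter_subset_right) h2c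
  · push_neg at hbig
    have hδs : δ < 1 / (1100 * ((k:ℝ) + 1)) := hbig
    have hδ1100 : δ < 1 / 1100 := by
      refine lt_of_lt_of_le hδs ?_
      rw [div_le_div_iff₀ (by positivity) (by norm_num)]
      nlinarith [Nat.cast_nonneg (α := ℝ) k]
    have hkδ : (k:ℝ) * δ < 1 / 1100 := by
      have h1 : (k:ℝ) * δ ≤ ((k:ℝ)+1) * δ := by nlinarith
      have h0 : δ * (1100 * ((k:ℝ)+1)) < 1 := (lt_div_iff₀ (by positivity)).1 hδs
      nlinarith [Nat.cast_nonneg (α := ℝ) k]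
    have hδprod : 1100 * (((k:ℝ)+1) * δ) < 1 := by
      have h0 : δ * (1100 * ((k:ℝ)+1)) < 1 := (lt_div_iff₀ (by positivity)).1 hδs
      nlinarith
    have hkδ0 : (0:ℝ) ≤ (k:ℝ) * δ := by positivity
    have hy₀n : ‖y₀‖ ≤ 3/4 := by
      have h1 : ‖y₀‖ ≤ ‖x₀‖ + ‖x₀ - y₀‖ := by
        calc ‖y₀‖ = ‖x₀ - (x₀ - y₀)‖ := by rw [sub_sub_cancel]
          _ ≤ ‖x₀‖ + ‖x₀ - y₀‖ := norm_sub_le _ _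
      have h2 : ‖x₀ - y₀‖ < δ := by rw [← dist_eq_norm]; exact hy₀d
      linarith
    -- Step 1: every vector of V is 8δ‖v‖-close to W
    have hVW : ∀ v ∈ V, ∃ w ∈ W, ‖v - w‖ ≤ 8 * δ * ‖v‖ := by
      intro v hv
      rcases eq_or_ne v 0 with rfl | hv0
      · exact ⟨0, W.zero_mem, by simp⟩
      have hvn : (0:ℝ) < ‖v‖ := norm_pos_iff.2 hv0
      set u : X := (4 * ‖v‖)⁻¹ • v with hu
      have hun : ‖u‖ = 1/4 := by
        rw [hu, norm_smul, norm_inv, Real.norm_eq_abs, abs_of_pos (by positivity)]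
        field_simp
      have huV : u ∈ V := V.smul_mem _ hv
      have hxuP : x₀ + u ∈ P ∩ ball 0 1 := by
        refine ⟨⟨v₀ + u, V.add_mem hv₀V huV, by rw [← hv₀]; dsimp only; abel⟩, mem_ball_zero_iff.2 ?_⟩
        have := norm_add_le x₀ u
        rw [hun] at this
        linarith
      obtain ⟨y₁, hy₁Q, hy₁d⟩ := mem_thickening_iff.1 (hsub hxuP)
      obtain ⟨w₁, hw₁W, hw₁⟩ := hy₁Q
      have hdiff : ‖u - (w₁ - w₀)‖ ≤ 2 * δ := by
        have he : u - (w₁ - w₀) = (x₀ + u - y₁) - (x₀ - y₀) := by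
          rw [← hw₁, ← hw₀]; dsimp only; abel
        rw [he]
        have h1 : ‖x₀ + u - y₁‖ ≤ δ := by
          rw [← dist_eq_norm]; exact le_of_lt hy₁d
        have h2 : ‖x₀ - y₀‖ ≤ δ := by
          rw [← dist_eq_norm]; exact le_of_lt hy₀d
        calc ‖(x₀ + u - y₁) - (x₀ - y₀)‖ ≤ ‖x₀ + u - y₁‖ + ‖x₀ - y₀‖ := norm_sub_le _ _
          _ ≤ 2 * δ := by linarith
      refine ⟨(4 * ‖v‖) • (w₁ - w₀), W.smul_mem _ (W.sub_mem hw₁W hw₀W), ?_⟩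
      have hvu : v = (4 * ‖v‖) • u := by
        rw [hu, smul_smul, mul_inv_cancel₀ (by positivity), one_smul]
      have hvess : v - (4 * ‖v‖) • (w₁ - w₀) = (4 * ‖v‖) • (u - (w₁ - w₀)) := by
        conv_rhs => rw [hu, smul_sub, smul_smul]
        rw [mul_inv_cancel₀ (ne_of_gt (show (0:ℝ) < 4 * ‖v‖ by positivity)), one_smul]
      calc ‖v - (4 * ‖v‖) • (w₁ - w₀)‖ = ‖(4 * ‖v‖) • (u - (w₁ - w₀))‖ := by
            rw [hvess]
        _ = (4 * ‖v‖) * ‖u - (w₁ - w₀)‖ := by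
            rw [norm_smul, Real.norm_eq_abs, abs_of_pos (by positivity)]
        _ ≤ (4 * ‖v‖) * (2 * δ) := by
            exact mul_le_mul_of_nonneg_left hdiff (by positivity)
        _ = 8 * δ * ‖v‖ := by ring
    -- Step 2: every vector of W is 16kδ‖w‖-close to V
    have hWV := subspace_symm_close k V W hV hW (ε := 8 * δ) (by positivity)
      (by linarith) hVW
    refine ⟨?_, ?_⟩
    · -- affine Hausdorff bound
      refine le_trans (hausdorffDist_le_of_mem_dist
        (r := 561 * ((k:ℝ)+1) * δ) (by positivity) ?_ ?_) (by linarith)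
      · -- P ∩ B₁ → Q ∩ B₁
        intro x hx
        obtain ⟨y, hyQ, hyd⟩ := mem_thickening_iff.1 (hsub hx)
        obtain ⟨w, hwW, hwy⟩ := hyQ
        have hxn : ‖x‖ < 1 := mem_ball_zero_iff.1 hx.2
        have hyn : ‖y‖ < 1 + δ := by
          have := dist_triangle y x (0:X)
          rw [dist_zero_right, dist_comm y x, dist_zero_right] at this
          linarith
        obtain ⟨y', hy'Q, hy'd⟩ := affine_shrink W q y y₀
          (by rw [← hwy]; simpa using hwW)
          (by rw [← hw₀]; simpa using hw₀W)
          hy₀n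
          (by
            have := norm_sub_le y y₀
            linarith)
          hδpos (by linarith) hyn
        refine ⟨y', hy'Q, ?_⟩
        have : dist x y' ≤ dist x y + dist y y' := dist_triangle x y y'
        rw [dist_eq_norm y y'] at this
        linarith
      · -- Q ∩ B₁ → P ∩ B₁
        intro y hy
        obtain ⟨⟨w, hwW, hwy⟩, hyb⟩ := hy
        have hyn : ‖y‖ < 1 := mem_ball_zero_iff.1 hyb
        have hyy₀W : y - y₀ ∈ W := by
          rw [← hwy, ← hw₀]
          have : q + w - (q + w₀) = w - w₀ := by abel
          rw [this]
          exact W.sub_mem hwW hw₀W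
        obtain ⟨v, hvV, hvd, hvn⟩ := hWV (y - y₀) hyy₀W
        have hyy₀n : ‖y - y₀‖ ≤ 2 := by
          have := norm_sub_le y y₀
          linarith
        have hvd2 : ‖(y - y₀) - v‖ ≤ 32 * k * δ := by
          calc ‖(y - y₀) - v‖ ≤ 2 * k * (8 * δ) * ‖y - y₀‖ := hvd
            _ ≤ 2 * k * (8 * δ) * 2 := by
                refine mul_le_mul_of_nonneg_left hyy₀n (by positivity)
            _ = 32 * k * δ := by ring
        set x : X := x₀ + v with hxdef
        have hxP : x - p ∈ V := by
          have : x - p = (x₀ - p) + v := by rw [hxdef]; abel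
          rw [this]
          have hx₀p : x₀ - p ∈ V := by
            rw [← hv₀]
            have : p + v₀ - p = v₀ := by abel
            rw [this]; exact hv₀V
          exact V.add_mem hx₀p hvV
        have hxy : ‖x - y‖ ≤ (32 * k + 1) * δ := by
          have he : x - y = (x₀ - y₀) - ((y - y₀) - v) := by rw [hxdef]; abel
          rw [he]
          have h1 : ‖x₀ - y₀‖ ≤ δ := by rw [← dist_eq_norm]; exact le_of_lt hy₀d
          calc ‖(x₀ - y₀) - ((y - y₀) - v)‖ ≤ ‖x₀ - y₀‖ + ‖(y - y₀) - v‖ := norm_sub_le _ _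
            _ ≤ (32 * k + 1) * δ := by linarith
        have hr₁pos : (0:ℝ) < (32 * k + 1) * δ := by positivity
        have hr₁small : (32 * (k:ℝ) + 1) * δ ≤ 1/8 := by nlinarith [hδprod, hkδ0]
        have hxn : ‖x‖ < 1 + (32 * k + 1) * δ := by
          have := norm_sub_le x y  -- ‖x - y‖ ≥ ‖x‖ - ‖y‖
          have h2 : ‖x‖ ≤ ‖x - y‖ + ‖y‖ := by
            have := norm_add_le (x - y) y
            simpa using this
          linarith
        have hxx₀ : ‖x - x₀‖ ≤ 2 := by
          have h2 : ‖x - x₀‖ ≤ ‖x - y‖ + ‖y‖ + ‖x₀‖ := by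
            have h3 : x - x₀ = (x - y) + y - x₀ := by abel
            rw [h3]
            calc ‖(x - y) + y - x₀‖ ≤ ‖(x - y) + y‖ + ‖x₀‖ := norm_sub_le _ _
              _ ≤ ‖x - y‖ + ‖y‖ + ‖x₀‖ := by linarith [norm_add_le (x - y) y]
          have h4 : (32 * (k:ℝ) + 1) * δ ≤ 1/8 := hr₁small
          linarith
        obtain ⟨x', hx'P, hx'd⟩ := affine_shrink V p x x₀ hxP
          (by
            rw [← hv₀]
            have : p + v₀ - p = v₀ := by abel
            rw [this]; exact hv₀V)
          (by linarith) hxx₀ hr₁pos hr₁small hxn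
        refine ⟨x', hx'P, ?_⟩
        rw [dist_comm, dist_eq_norm]
        calc ‖x' - y‖ ≤ ‖x' - x‖ + ‖x - y‖ := norm_sub_le_norm_sub_add_norm_sub x' x y
          _ ≤ 16 * ((32 * k + 1) * δ) + (32 * k + 1) * δ := by
              rw [norm_sub_rev] at hx'd
              linarith
          _ ≤ 561 * ((k:ℝ)+1) * δ := by nlinarith [hδprod, hkδ0]
    · -- linear Hausdorff bound
      refine le_trans (hausdorffDist_le_of_mem_dist
        (r := 33 * ((k:ℝ)+1) * δ) (by positivity) ?_ ?_) (by linarith)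
      · intro v hv
        obtain ⟨hvV, hvb⟩ := hv
        have hvn : ‖v‖ < 1 := mem_ball_zero_iff.1 hvb
        obtain ⟨w, hwW, hwd⟩ := hVW v hvV
        have hwd8 : ‖v - w‖ ≤ 8 * δ := by
          calc ‖v - w‖ ≤ 8 * δ * ‖v‖ := hwd
            _ ≤ 8 * δ := by nlinarith [norm_nonneg v]
        have hwn : ‖w‖ < 1 + 8 * δ := by
          have : ‖w‖ ≤ ‖v‖ + ‖v - w‖ := by
            have := norm_add_le (w - v) v
            simp only [sub_add_cancel] at this
            rw [norm_sub_rev v w]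
            linarith
          linarith
        obtain ⟨w', hw'W, hw'd⟩ := shrink_into_ball W hwW (by positivity) hwn
        refine ⟨w', hw'W, ?_⟩
        rw [dist_eq_norm]
        calc ‖v - w'‖ ≤ ‖v - w‖ + ‖w - w'‖ := norm_sub_le_norm_sub_add_norm_sub v w w'
          _ ≤ 16 * δ := by linarith
          _ ≤ 33 * ((k:ℝ)+1) * δ := by linarith
      · intro w hw
        obtain ⟨hwW, hwb⟩ := hw
        have hwn : ‖w‖ < 1 := mem_ball_zero_iff.1 hwb
        obtain ⟨v, hvV, hvd, _⟩ := hWV w hwW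
        have hvd16 : ‖w - v‖ ≤ 16 * k * δ := by
          calc ‖w - v‖ ≤ 2 * k * (8 * δ) * ‖w‖ := hvd
            _ = 16 * ((k:ℝ) * δ) * ‖w‖ := by ring
            _ ≤ 16 * ((k:ℝ) * δ) * 1 := by
                exact mul_le_mul_of_nonneg_left hwn.le (by positivity)
            _ = 16 * k * δ := by ring
        have hvn : ‖v‖ < 1 + (16 * k + 1) * δ := by
          have : ‖v‖ ≤ ‖w‖ + ‖w - v‖ := by
            have := norm_add_le (v - w) w
            simp only [sub_add_cancel] at this
            rw [norm_sub_rev w v]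
            linarith
          linarith
        obtain ⟨v', hv'V, hv'd⟩ := shrink_into_ball V hvV (by positivity) hvn
        refine ⟨v', hv'V, ?_⟩
        rw [dist_eq_norm]
        calc ‖w - v'‖ ≤ ‖w - v‖ + ‖v - v'‖ := norm_sub_le_norm_sub_add_norm_sub w v v'
          _ ≤ 16 * k * δ + (16 * k + 1) * δ := by linarith
          _ ≤ 33 * ((k:ℝ)+1) * δ := by linarith
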